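/- Let σ be a weight function. Then there exist an entire function Q on ℂ and a constant a ∈ (0,1] such that for every n ∈ ℕ: inf_{|Im z| ≤ n} e^{−aσ(|Re z|)} |Q(z)| > 0 and sup_{|Im z| ≤ n} e^{−σ(|Re z|)} |Q(z)| < ∞. -/

import Mathlib

open Filter Asymptotics

/-- A weight function: increasing, non-negative on `[0,∞)`, with `σ(2t) = O(σ(t))` and
`log t = o(σ(t))` as `t → ∞`. -/
def IsWeightFunction (σ : ℝ → ℝ) : Prop :=
  MonotoneOn σ (Set.Ici 0) ∧ (∀ t, 0 ≤ t → 0 ≤ σ t) ∧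
    (fun t => σ (2 * t)) =O[atTop] σ ∧ (fun t => Real.log t) =o[atTop] σ

private lemma abs_pow_sub_pow_aux (z : ℂ) (m : ℕ) :
    ‖z ^ (m + 1) - (z.re : ℂ) ^ (m + 1)‖ ≤
      ((m : ℝ) + 1) * ‖z‖ ^ m * |z.im| := by
  have hdiff : z - (z.re : ℂ) = (z.im : ℂ) * Complex.I := by
    apply Complex.ext <;> simp
  have habsdiff : ‖z - (z.re : ℂ)‖ = |z.im| := by
    rw [hdiff, norm_mul, Complex.norm_real, Real.norm_eq_abs, Complex.norm_I, mul_one]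
  induction m with
  | zero => simp [pow_one, habsdiff]
  | succ m ih =>
      have key : z ^ (m + 1 + 1) - (z.re : ℂ) ^ (m + 1 + 1)
          = z ^ (m + 1) * (z - (z.re : ℂ))
            + (z ^ (m + 1) - (z.re : ℂ) ^ (m + 1)) * (z.re : ℂ) := by
        ring
      have h2 : ‖(z.re : ℂ)‖ ≤ ‖z‖ := by
        rw [Complex.norm_real, Real.norm_eq_abs]; exact Complex.abs_re_le_norm z
      calc ‖z ^ (m + 1 + 1) - (z.re : ℂ) ^ (m + 1 + 1)‖
          = ‖z ^ (m + 1) * (z - (z.re : ℂ))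
            + (z ^ (m + 1) - (z.re : ℂ) ^ (m + 1)) * (z.re : ℂ)‖ := by rw [key]
        _ ≤ ‖z ^ (m + 1) * (z - (z.re : ℂ))‖
            + ‖(z ^ (m + 1) - (z.re : ℂ) ^ (m + 1)) * (z.re : ℂ)‖ :=
            norm_add_le _ _
        _ = ‖z‖ ^ (m + 1) * |z.im|
            + ‖z ^ (m + 1) - (z.re : ℂ) ^ (m + 1)‖ * ‖(z.re : ℂ)‖ := by
            rw [norm_mul, norm_mul, norm_pow, habsdiff]
        _ ≤ ‖z‖ ^ (m + 1) * |z.im|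
            + (((m : ℝ) + 1) * ‖z‖ ^ m * |z.im|) * ‖z‖ := by
            gcongr
        _ = ((((m : ℕ) + 1 : ℕ) : ℝ) + 1) * ‖z‖ ^ (m + 1) * |z.im| := by
            push_cast; ring

set_option maxHeartbeats 3200000

/-- For every weight function σ there exist an entire function Q and
a ∈ (0,1] such that on every horizontal strip |Im z| ≤ n, |Q(z)| is bounded below by a
positive multiple of e^{aσ(|Re z|)} and above by a multiple of e^{σ(|Re z|)}. -/
theorem stmt5 (σ : ℝ → ℝ) (hσ : IsWeightFunction σ) :
    ∃ (Q : ℂ → ℂ) (a : ℝ), Differentiable ℂ Q ∧ a ∈ Set.Ioc (0 : ℝ) 1 ∧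
      ∀ n : ℕ,
        (∃ c > 0, ∀ z : ℂ, |z.im| ≤ n →
          c ≤ Real.exp (-(a * σ |z.re|)) * ‖Q z‖) ∧
        (∃ C : ℝ, ∀ z : ℂ, |z.im| ≤ n →
          Real.exp (-σ |z.re|) * ‖Q z‖ ≤ C) := by
  obtain ⟨hmono, hnn, hdb, -⟩ := hσ
  have hm : ∀ s t : ℝ, 0 ≤ s → s ≤ t → σ s ≤ σ t := fun s t hs hst =>
    hmono (Set.mem_Ici.mpr hs) (Set.mem_Ici.mpr (hs.trans hst)) hst
  -- doubling constants
  obtain ⟨c0, hc0⟩ := hdb.isBigOWith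
  obtain ⟨T1, hT1⟩ := eventually_atTop.mp hc0.bound
  set K : ℝ := max c0 1 with hKdef
  set T₀ : ℝ := max T1 1 with hTdef
  have hK1 : (1 : ℝ) ≤ K := le_max_right _ _
  have hK0 : (0 : ℝ) < K := lt_of_lt_of_le one_pos hK1
  have hT₀1 : (1 : ℝ) ≤ T₀ := le_max_right _ _
  have hT₀0 : (0 : ℝ) < T₀ := lt_of_lt_of_le one_pos hT₀1
  have hKσ : ∀ t, T₀ ≤ t → σ (2 * t) ≤ K * σ t := by
    intro t ht
    have ht0 : (0 : ℝ) ≤ t := le_trans hT₀0.le ht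
    have h1 := hT1 t (le_trans (le_max_left _ _) ht)
    rw [Real.norm_eq_abs, Real.norm_eq_abs, abs_of_nonneg (hnn t ht0)] at h1
    calc σ (2 * t) ≤ |σ (2 * t)| := le_abs_self _
      _ ≤ c0 * σ t := h1
      _ ≤ K * σ t := mul_le_mul_of_nonneg_right (le_max_left _ _) (hnn t ht0)
  -- iterated doubling
  have Ldb : ∀ s : ℝ, T₀ ≤ s → ∀ i : ℕ, σ (2 ^ i * s) ≤ K ^ i * σ s := by
    intro s hs i
    have hs0 : (0 : ℝ) ≤ s := le_trans hT₀0.le hs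
    induction i with
    | zero => simp
    | succ i ih =>
        have h2is : T₀ ≤ 2 ^ i * s :=
          hs.trans (le_mul_of_one_le_left hs0 (one_le_pow₀ (by norm_num)))
        calc σ (2 ^ (i + 1) * s) = σ (2 * (2 ^ i * s)) := by ring_nf
          _ ≤ K * σ (2 ^ i * s) := hKσ _ h2is
          _ ≤ K * (K ^ i * σ s) := mul_le_mul_of_nonneg_left ih hK0.le
          _ = K ^ (i + 1) * σ s := by ring
  -- choice of the even exponent N
  obtain ⟨M, hMK⟩ := exists_nat_gt K
  set N : ℕ := 2 * M + 2 with hNdef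
  have hN2 : 2 ≤ N := by omega
  have hNR : (2 : ℝ) ≤ (N : ℝ) := by exact_mod_cast hN2
  have hKN : 2 * K ≤ 2 ^ N := by
    have h1 : (M : ℝ) < 2 ^ M := by exact_mod_cast (Nat.lt_two_pow_self (n := M))
    have h2 : (2 : ℝ) ^ (M + 1) ≤ 2 ^ N := by
      apply pow_le_pow_right₀ (by norm_num) (by omega)
    have h4 : K < 2 ^ M := hMK.trans h1
    have h3 : (2 : ℝ) ^ (M + 1) = 2 * 2 ^ M := by ring
    nlinarith
  have h2N4 : (4 : ℝ) ≤ 2 ^ N := by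
    calc (4 : ℝ) = 2 ^ 2 := by norm_num
      _ ≤ 2 ^ N := pow_le_pow_right₀ (by norm_num) hN2
  have hNeven : ∀ x : ℝ, |x| ^ N = x ^ N := by
    intro x
    have hev : Even N := ⟨M + 1, by omega⟩
    rw [← abs_pow, abs_of_nonneg (hev.pow_nonneg x)]
  -- the dyadic increments
  set d : ℕ → ℝ := fun k => σ (2 ^ (k + 1)) - σ (2 ^ k) with hddef
  have h2k1 : ∀ k : ℕ, (1 : ℝ) ≤ 2 ^ k := fun k => one_le_pow₀ (by norm_num)
  have hd0 : ∀ k, 0 ≤ d k := by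
    intro k
    have := hm (2 ^ k) (2 ^ (k + 1)) (by positivity)
      (pow_le_pow_right₀ (by norm_num) (Nat.le_succ k))
    simpa [hddef] using this
  have hdK : ∀ k, d k ≤ K ^ (k + 1) * σ T₀ := by
    intro k
    have h1 : d k ≤ σ (2 ^ (k + 1)) := by
      have := hnn (2 ^ k) (by positivity)
      simp only [hddef]; linarith
    have h2 : σ ((2 : ℝ) ^ (k + 1)) ≤ σ (2 ^ (k + 1) * T₀) :=
      hm _ _ (by positivity) (le_mul_of_one_le_right (by positivity) hT₀1)
    exact h1.trans (h2.trans (Ldb T₀ le_rfl (k + 1)))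
  -- the building blocks
  set F : ℕ → ℂ → ℂ :=
    fun k z => (d k : ℂ) * (1 - Complex.exp (-(z / (((2 : ℝ) ^ k : ℝ) : ℂ)) ^ N)) with hFdef
  have hFdiff : ∀ k, Differentiable ℂ (F k) := by
    intro k
    apply Differentiable.const_mul
    apply Differentiable.const_sub
    exact (((differentiable_id.div_const _).pow N).neg).cexp
  have hre_w : ∀ (k : ℕ) (z : ℂ),
      ((z / (((2 : ℝ) ^ k : ℝ) : ℂ)) ^ N).re = (z ^ N).re / ((2 : ℝ) ^ k) ^ N := by
    intro k z
    rw [div_pow, ← Complex.ofReal_pow, Complex.div_ofReal_re]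
  have habs_w : ∀ (k : ℕ) (z : ℂ),
      ‖(z / (((2 : ℝ) ^ k : ℝ) : ℂ)) ^ N‖ = (‖z‖ / 2 ^ k) ^ N := by
    intro k z
    rw [norm_pow, norm_div, Complex.norm_real, Real.norm_eq_abs, abs_of_nonneg (by positivity : (0:ℝ) ≤ 2 ^ k)]
  have hFre : ∀ (k : ℕ) (z : ℂ),
      (F k z).re = d k * (1 - (Complex.exp (-(z / (((2 : ℝ) ^ k : ℝ) : ℂ)) ^ N)).re) := by
    intro k z
    simp only [hFdef, Complex.re_ofReal_mul, Complex.sub_re, Complex.one_re]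
  -- uniform term bound on balls
  have hTB : ∀ R : ℝ, 1 ≤ R → ∀ z : ℂ, ‖z‖ ≤ R → ∀ k : ℕ,
      ‖F k z‖ ≤ d k * (R / 2 ^ k) ^ N * (2 ^ N * (1 + Real.exp (R ^ N))) := by
    intro R hR z hz k
    have hR0 : (0 : ℝ) < R := lt_of_lt_of_le one_pos hR
    have habsF : ‖F k z‖
        = d k * ‖1 - Complex.exp (-(z / (((2 : ℝ) ^ k : ℝ) : ℂ)) ^ N)‖ := by
      simp only [hFdef]
      rw [norm_mul, Complex.norm_real, Real.norm_eq_abs, abs_of_nonneg (hd0 k)]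
    have habsw : ‖(z / (((2 : ℝ) ^ k : ℝ) : ℂ)) ^ N‖ ≤ (R / 2 ^ k) ^ N := by
      rw [habs_w k z]
      exact pow_le_pow_left₀ (by positivity) (by gcongr) N
    by_cases hk : (2 : ℝ) ^ k ≤ 2 * R
    · -- small k : crude bound
      have h1 : ‖1 - Complex.exp (-(z / (((2 : ℝ) ^ k : ℝ) : ℂ)) ^ N)‖
          ≤ 1 + Real.exp (R ^ N) := by
        have hb1 : ‖Complex.exp (-(z / (((2 : ℝ) ^ k : ℝ) : ℂ)) ^ N)‖
            ≤ Real.exp (R ^ N) := by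
          rw [Complex.norm_exp]
          apply Real.exp_le_exp.2
          have h2 : ((-(z / (((2 : ℝ) ^ k : ℝ) : ℂ)) ^ N)).re
              ≤ ‖(-(z / (((2 : ℝ) ^ k : ℝ) : ℂ)) ^ N)‖ := Complex.re_le_norm _
          have h3 : ‖(-(z / (((2 : ℝ) ^ k : ℝ) : ℂ)) ^ N)‖ ≤ R ^ N := by
            rw [norm_neg]
            refine habsw.trans ?_
            apply pow_le_pow_left₀ (by positivity)
            rw [div_le_iff₀ (by positivity)]
            exact le_mul_of_one_le_right hR0.le (h2k1 k)
          exact h2.trans h3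
        calc ‖1 - Complex.exp (-(z / (((2 : ℝ) ^ k : ℝ) : ℂ)) ^ N)‖
            ≤ ‖(1 : ℂ)‖ + ‖Complex.exp _‖ := by
              exact (norm_sub_le _ _)
          _ ≤ 1 + Real.exp (R ^ N) := by rw [norm_one]; gcongr
      have h2 : (1 : ℝ) ≤ (R / 2 ^ k) ^ N * 2 ^ N := by
        have : (1 : ℝ) ≤ (R / 2 ^ k) * 2 := by
          rw [div_mul_eq_mul_div, le_div_iff₀ (by positivity)]
          linarith
        calc (1 : ℝ) = 1 ^ N := (one_pow N).symm
          _ ≤ ((R / 2 ^ k) * 2) ^ N := pow_le_pow_left₀ (by norm_num) this N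
          _ = (R / 2 ^ k) ^ N * 2 ^ N := mul_pow _ _ _
      rw [habsF]
      calc d k * ‖1 - Complex.exp (-(z / (((2 : ℝ) ^ k : ℝ) : ℂ)) ^ N)‖
          ≤ d k * (1 + Real.exp (R ^ N)) := mul_le_mul_of_nonneg_left h1 (hd0 k)
        _ = d k * 1 * (1 + Real.exp (R ^ N)) := by ring
        _ ≤ d k * ((R / 2 ^ k) ^ N * 2 ^ N) * (1 + Real.exp (R ^ N)) := by
            have hpos : (0 : ℝ) ≤ 1 + Real.exp (R ^ N) := by positivity
            apply mul_le_mul_of_nonneg_right _ hpos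
            exact mul_le_mul_of_nonneg_left h2 (hd0 k)
        _ = d k * (R / 2 ^ k) ^ N * (2 ^ N * (1 + Real.exp (R ^ N))) := by ring
    · -- large k : linear bound
      push_neg at hk
      have hsmall : ‖(z / (((2 : ℝ) ^ k : ℝ) : ℂ)) ^ N‖ ≤ (1 / 2 : ℝ) ^ N := by
        refine habsw.trans ?_
        apply pow_le_pow_left₀ (by positivity)
        rw [div_le_div_iff₀ (by positivity) (by norm_num)]
        linarith
      have hsmall1 : ‖(z / (((2 : ℝ) ^ k : ℝ) : ℂ)) ^ N‖ ≤ 1 := by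
        refine hsmall.trans ?_
        calc ((1 : ℝ) / 2) ^ N ≤ 1 ^ N := pow_le_pow_left₀ (by norm_num) (by norm_num) N
          _ = 1 := one_pow N
      have h1 : ‖1 - Complex.exp (-(z / (((2 : ℝ) ^ k : ℝ) : ℂ)) ^ N)‖
          ≤ 2 * (R / 2 ^ k) ^ N := by
        rw [← neg_sub, norm_neg]
        calc ‖Complex.exp (-(z / (((2 : ℝ) ^ k : ℝ) : ℂ)) ^ N) - 1‖
            ≤ 2 * ‖-(z / (((2 : ℝ) ^ k : ℝ) : ℂ)) ^ N‖ := by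
              apply Complex.norm_exp_sub_one_le
              rwa [norm_neg]
          _ = 2 * ‖(z / (((2 : ℝ) ^ k : ℝ) : ℂ)) ^ N‖ := by rw [norm_neg]
          _ ≤ 2 * (R / 2 ^ k) ^ N := by gcongr
      rw [habsF]
      calc d k * ‖1 - Complex.exp (-(z / (((2 : ℝ) ^ k : ℝ) : ℂ)) ^ N)‖
          ≤ d k * (2 * (R / 2 ^ k) ^ N) := mul_le_mul_of_nonneg_left h1 (hd0 k)
        _ ≤ d k * (R / 2 ^ k) ^ N * (2 ^ N * (1 + Real.exp (R ^ N))) := by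
            have h2 : (2 : ℝ) ≤ 2 ^ N * (1 + Real.exp (R ^ N)) := by
              have he : (0 : ℝ) ≤ Real.exp (R ^ N) := (Real.exp_pos _).le
              nlinarith
            have h3 : (0 : ℝ) ≤ d k * (R / 2 ^ k) ^ N :=
              mul_nonneg (hd0 k) (by positivity)
            calc d k * (2 * (R / 2 ^ k) ^ N) = d k * (R / 2 ^ k) ^ N * 2 := by ring
              _ ≤ d k * (R / 2 ^ k) ^ N * (2 ^ N * (1 + Real.exp (R ^ N))) :=
                  mul_le_mul_of_nonneg_left h2 h3
  -- summability of the dominating series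
  have hSbase : Summable (fun k => d k * (((2 : ℝ) ^ N)⁻¹) ^ k) := by
    apply Summable.of_nonneg_of_le
      (fun k => mul_nonneg (hd0 k) (by positivity))
      (fun k => ?_)
      (((summable_geometric_of_lt_one (by norm_num : (0:ℝ) ≤ 1/2)
        (by norm_num : (1/2 : ℝ) < 1))).mul_left (K * σ T₀))
    have h1 : d k * (((2 : ℝ) ^ N)⁻¹) ^ k ≤ (K ^ (k + 1) * σ T₀) * (((2 : ℝ) ^ N)⁻¹) ^ k :=
      mul_le_mul_of_nonneg_right (hdK k) (by positivity)
    refine h1.trans ?_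
    have hKK : ∀ i : ℕ, K ^ i * (((2 : ℝ) ^ N)⁻¹) ^ i ≤ (1 / 2 : ℝ) ^ i := by
      intro i
      rw [← mul_pow]
      apply pow_le_pow_left₀ (by positivity)
      rw [mul_inv_le_iff₀ (by positivity)]
      calc K = (2 * K) / 2 := by ring
        _ ≤ 2 ^ N / 2 := by gcongr
        _ = 1 / 2 * 2 ^ N := by ring
    have hσT : 0 ≤ σ T₀ := hnn T₀ hT₀0.le
    calc (K ^ (k + 1) * σ T₀) * (((2 : ℝ) ^ N)⁻¹) ^ k
        = (K * σ T₀) * (K ^ k * (((2 : ℝ) ^ N)⁻¹) ^ k) := by ring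
      _ ≤ (K * σ T₀) * (1 / 2 : ℝ) ^ k := by
          apply mul_le_mul_of_nonneg_left (hKK k) (by positivity)
  have hSR : ∀ R C : ℝ, Summable (fun k => d k * (R / 2 ^ k) ^ N * C) := by
    intro R C
    apply (hSbase.mul_right (R ^ N * C)).congr
    intro k
    have hpow : ((2 : ℝ) ^ k) ^ N = ((2 : ℝ) ^ N) ^ k := by
      rw [← pow_mul, ← pow_mul, Nat.mul_comm]
    rw [div_pow, hpow, inv_pow, div_eq_mul_inv]
    ring
  have hFsummable : ∀ z : ℂ, Summable (fun k => F k z) := by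
    intro z
    apply Summable.of_norm
    apply Summable.of_nonneg_of_le (fun k => norm_nonneg _)
      (hTB (‖z‖ + 1) (by linarith [norm_nonneg z]) z (by linarith [norm_nonneg z]) )
    exact hSR _ _
  set g : ℂ → ℂ := fun z => ∑' k, F k z with hgdef
  have hgdiff : Differentiable ℂ g := by
    intro z₀
    have hR1 : (1 : ℝ) ≤ ‖z₀‖ + 1 := by linarith [norm_nonneg z₀]
    have hd : DifferentiableOn ℂ g (Metric.ball 0 (‖z₀‖ + 1)) := by
      apply Complex.differentiableOn_tsum_of_summable_norm
        (hSR (‖z₀‖ + 1) (2 ^ N * (1 + Real.exp ((‖z₀‖ + 1) ^ N))))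
        (fun k => (hFdiff k).differentiableOn) Metric.isOpen_ball
      intro k w hw
      apply hTB _ hR1
      rw [Metric.mem_ball, Complex.dist_eq, sub_zero] at hw
      exact hw.le
    have hmem : z₀ ∈ Metric.ball (0 : ℂ) (‖z₀‖ + 1) := by
      rw [Metric.mem_ball, Complex.dist_eq, sub_zero]
      linarith
    exact hd.differentiableAt (Metric.isOpen_ball.mem_nhds hmem)
  have hgre : ∀ z : ℂ, (g z).re = ∑' k, (F k z).re := fun z => Complex.re_tsum (hFsummable z)
  have hsre : ∀ z : ℂ, Summable (fun k => (F k z).re) := fun z =>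
    (Complex.hasSum_re (hFsummable z).hasSum).summable
  -- sector estimate
  have hsec : ∀ (b : ℝ) (z : ℂ), 0 ≤ b → |z.im| ≤ b → 8 * (N : ℝ) * (b + 1) ≤ |z.re| →
      |z.re| ^ N / 2 ≤ (z ^ N).re := by
    intro b z hb him hx
    set x : ℝ := |z.re| with hxdef
    have hx0 : (0 : ℝ) < x := by nlinarith
    have hbx : b * (8 * (N : ℝ)) ≤ x := by nlinarith
    have habsz : ‖z‖ ≤ x + b := by
      refine (Complex.norm_le_abs_re_add_abs_im z).trans ?_
      rw [← hxdef]
      linarith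
    have hNm : N - 1 + 1 = N := by omega
    set m : ℕ := N - 1 with hmdef
    have hmR : (m : ℝ) + 1 = (N : ℝ) := by
      rw [hmdef]
      exact_mod_cast congrArg (Nat.cast : ℕ → ℝ) hNm
    have key : ‖z ^ N - (z.re : ℂ) ^ N‖ ≤ (N : ℝ) * ‖z‖ ^ m * |z.im| := by
      have := abs_pow_sub_pow_aux z m
      rw [hmdef] at this ⊢
      rw [hNm] at this
      rw [hmR] at this  
      exact this
    -- bound for ‖z‖ ^ m
    have hzm : ‖z‖ ^ m ≤ 3 * x ^ m := by
      have h1 : ‖z‖ ≤ x * (1 + 1 / (8 * (N : ℝ))) := by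
        have : b ≤ x / (8 * (N : ℝ)) := by
          rw [le_div_iff₀ (by positivity)]
          linarith
        calc ‖z‖ ≤ x + b := habsz
          _ ≤ x + x / (8 * (N : ℝ)) := by linarith
          _ = x * (1 + 1 / (8 * (N : ℝ))) := by ring
      have h2 : (1 + 1 / (8 * (N : ℝ))) ≤ Real.exp (1 / (8 * (N : ℝ))) := by
        have := Real.add_one_le_exp (1 / (8 * (N : ℝ)))
        linarith
      have h3 : ‖z‖ ^ m ≤ x ^ m * Real.exp (1 / (8 * (N : ℝ))) ^ m := by
        calc ‖z‖ ^ m ≤ (x * (1 + 1 / (8 * (N : ℝ)))) ^ m :=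
            pow_le_pow_left₀ (norm_nonneg z) h1 m
          _ = x ^ m * (1 + 1 / (8 * (N : ℝ))) ^ m := mul_pow _ _ _
          _ ≤ x ^ m * Real.exp (1 / (8 * (N : ℝ))) ^ m := by
              apply mul_le_mul_of_nonneg_left _ (by positivity)
              exact pow_le_pow_left₀ (by positivity) h2 m
      have h4 : Real.exp (1 / (8 * (N : ℝ))) ^ m ≤ 3 := by
        rw [← Real.exp_nat_mul]
        have hstep : Real.exp ((m : ℝ) * (1 / (8 * (N : ℝ)))) ≤ Real.exp 1 := by
          apply Real.exp_le_exp.2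
          rw [mul_one_div, div_le_one (by positivity)]
          have hmN : (m : ℝ) ≤ (N : ℝ) := by
            have : m ≤ N := Nat.sub_le N 1
            exact_mod_cast this
          linarith
        have := Real.exp_one_lt_d9
        linarith
      calc ‖z‖ ^ m ≤ x ^ m * Real.exp (1 / (8 * (N : ℝ))) ^ m := h3
        _ ≤ x ^ m * 3 := mul_le_mul_of_nonneg_left h4 (by positivity)
        _ = 3 * x ^ m := by ring
    have key2 : ‖z ^ N - (z.re : ℂ) ^ N‖ ≤ (3 / 8) * x ^ N := by
      calc ‖z ^ N - (z.re : ℂ) ^ N‖ ≤ (N : ℝ) * ‖z‖ ^ m * |z.im| := key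
        _ ≤ (N : ℝ) * (3 * x ^ m) * b := by
            apply mul_le_mul _ him (abs_nonneg _) (by positivity)
            exact mul_le_mul_of_nonneg_left hzm (by positivity)
        _ ≤ (N : ℝ) * (3 * x ^ m) * (x / (8 * (N : ℝ))) := by
            apply mul_le_mul_of_nonneg_left _ (by positivity)
            rw [le_div_iff₀ (by positivity)]
            linarith
        _ = (3 / 8) * (x ^ m * x) := by field_simp
        _ = (3 / 8) * x ^ N := by rw [← pow_succ, hmdef, hNm]
    have e1 : ((z.re : ℂ) ^ N).re = x ^ N := by
      rw [← Complex.ofReal_pow, Complex.ofReal_re, hxdef, hNeven]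
    have e2 : (z ^ N).re = ((z.re : ℂ) ^ N).re + (z ^ N - (z.re : ℂ) ^ N).re := by
      simp [Complex.sub_re]
    have e3 : -(3 / 8 * x ^ N) ≤ (z ^ N - (z.re : ℂ) ^ N).re := by
      have h5 : |(z ^ N - (z.re : ℂ) ^ N).re| ≤ ‖z ^ N - (z.re : ℂ) ^ N‖ :=
        Complex.abs_re_le_norm _
      have := neg_abs_le ((z ^ N - (z.re : ℂ) ^ N).re)
      linarith
    have hxNpos : (0 : ℝ) ≤ x ^ N := by positivity
    rw [e2, e1]
    linarith
  -- per-term real-part facts under the sector condition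
  have hterm_facts : ∀ z : ℂ, 0 ≤ (z ^ N).re →
      (∀ k : ℕ, 0 ≤ (F k z).re) ∧ (∀ k : ℕ, (F k z).re ≤ 2 * d k) := by
    intro z hz
    have hwre : ∀ k : ℕ, 0 ≤ ((z / (((2 : ℝ) ^ k : ℝ) : ℂ)) ^ N).re := by
      intro k
      rw [hre_w k z]
      positivity
    have hexpre : ∀ k : ℕ,
        |(Complex.exp (-(z / (((2 : ℝ) ^ k : ℝ) : ℂ)) ^ N)).re| ≤ 1 := by
      intro k
      refine (Complex.abs_re_le_norm _).trans ?_
      rw [Complex.norm_exp]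
      rw [show (-(z / (((2 : ℝ) ^ k : ℝ) : ℂ)) ^ N).re
        = -(((z / (((2 : ℝ) ^ k : ℝ) : ℂ)) ^ N).re) from Complex.neg_re _]
      have h9 : Real.exp (-((z / (((2 : ℝ) ^ k : ℝ) : ℂ)) ^ N).re) ≤ Real.exp 0 :=
        Real.exp_le_exp.2 (by linarith [hwre k])
      rwa [Real.exp_zero] at h9
    constructor
    · intro k
      rw [hFre k z]
      have := abs_le.mp (hexpre k)
      have h1 : 0 ≤ 1 - (Complex.exp (-(z / (((2 : ℝ) ^ k : ℝ) : ℂ)) ^ N)).re := by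
        linarith [this.2]
      exact mul_nonneg (hd0 k) h1
    · intro k
      rw [hFre k z]
      have := abs_le.mp (hexpre k)
      have h1 : 1 - (Complex.exp (-(z / (((2 : ℝ) ^ k : ℝ) : ℂ)) ^ N)).re ≤ 2 := by
        linarith [this.1]
      calc d k * (1 - (Complex.exp (-(z / (((2 : ℝ) ^ k : ℝ) : ℂ)) ^ N)).re)
          ≤ d k * 2 := mul_le_mul_of_nonneg_left h1 (hd0 k)
        _ = 2 * d k := by ring
  -- telescoping sums
  have htel : ∀ nn : ℕ, ∑ k ∈ Finset.range nn, d k = σ ((2 : ℝ) ^ nn) - σ 1 := by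
    intro nn
    simpa only [pow_zero] using Finset.sum_range_sub (fun k => σ ((2 : ℝ) ^ k)) nn
  -- the two estimates in the far region
  have hBoth : ∀ (b : ℝ) (z : ℂ), 0 ≤ b → |z.im| ≤ b →
      8 * (N : ℝ) * (b + 1) + 2 * T₀ + 8 ≤ |z.re| →
      (σ |z.re| / (2 * K) - σ 1 / 2 ≤ (g z).re ∧ (g z).re ≤ 4 * K ^ 3 * σ |z.re|) := by
    intro b z hb him hx
    set x : ℝ := |z.re| with hxdef
    have hNpos : (0 : ℝ) < (N : ℝ) := by linarith [hNR]
    have hx8 : (8 : ℝ) ≤ x := by nlinarith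
    have hx0 : (0 : ℝ) < x := by linarith
    have hxT : 2 * T₀ ≤ x := by nlinarith
    have hsecz : x ^ N / 2 ≤ (z ^ N).re := hsec b z hb him (by nlinarith)
    have hsec0 : 0 ≤ (z ^ N).re := le_trans (by positivity) hsecz
    obtain ⟨hFnn, hFle2⟩ := hterm_facts z hsec0
    -- dyadic index
    set j : ℕ := Nat.log 2 ⌊x⌋₊ with hjdef
    have hfl1 : 1 ≤ ⌊x⌋₊ := by
      rw [Nat.one_le_iff_ne_zero, ← Nat.pos_iff_ne_zero, Nat.floor_pos]
      linarith
    have hj1 : (2 : ℝ) ^ j ≤ x := by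
      have h1 : (2 : ℕ) ^ j ≤ ⌊x⌋₊ := Nat.pow_log_le_self 2 (by omega)
      calc (2 : ℝ) ^ j = ((2 ^ j : ℕ) : ℝ) := by push_cast; ring
        _ ≤ (⌊x⌋₊ : ℝ) := by exact_mod_cast h1
        _ ≤ x := Nat.floor_le hx0.le
    have hj2 : x ≤ (2 : ℝ) ^ (j + 1) := by
      have h1 : ⌊x⌋₊ < 2 ^ (j + 1) := Nat.lt_pow_succ_log_self (by norm_num) _
      have h2 : x < (⌊x⌋₊ : ℝ) + 1 := Nat.lt_floor_add_one x
      have h3 : ((⌊x⌋₊ : ℕ) : ℝ) + 1 ≤ ((2 ^ (j + 1) : ℕ) : ℝ) := by exact_mod_cast h1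
      calc x ≤ (⌊x⌋₊ : ℝ) + 1 := h2.le
        _ ≤ ((2 ^ (j + 1) : ℕ) : ℝ) := h3
        _ = (2 : ℝ) ^ (j + 1) := by push_cast; ring
    have hT2j : T₀ ≤ (2 : ℝ) ^ j := by
      have h4 : x ≤ 2 * 2 ^ j := by
        calc x ≤ (2 : ℝ) ^ (j + 1) := hj2
          _ = 2 * 2 ^ j := by ring
      linarith
    have hσ2jx : σ ((2 : ℝ) ^ j) ≤ σ x := hm _ _ (by positivity) hj1
    constructor
    · -- LOWER BOUND
      have hFhalf : ∀ k ∈ Finset.range j, d k / 2 ≤ (F k z).re := by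
        intro k hk
        rw [Finset.mem_range] at hk
        have h2k : (2 : ℝ) ^ k ≤ x / 2 := by
          have h1 : (2 : ℝ) ^ (k + 1) ≤ 2 ^ j := pow_le_pow_right₀ (by norm_num) (by omega)
          rw [le_div_iff₀ (by norm_num)]
          calc (2 : ℝ) ^ k * 2 = 2 ^ (k + 1) := by ring
            _ ≤ 2 ^ j := h1
            _ ≤ x := hj1
        have hwre2 : (2 : ℝ) ≤ ((z / (((2 : ℝ) ^ k : ℝ) : ℂ)) ^ N).re := by
          rw [hre_w k z]
          have hden : ((2 : ℝ) ^ k) ^ N ≤ (x / 2) ^ N :=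
            pow_le_pow_left₀ (by positivity) h2k N
          have h3 : (x ^ N / 2) / ((x / 2) ^ N) ≤ (z ^ N).re / ((2 : ℝ) ^ k) ^ N :=
            div_le_div₀ hsec0 hsecz (by positivity) hden
          have hcalc : (x ^ N / 2) / ((x / 2) ^ N) = 2 ^ N / 2 := by
            rw [div_pow]
            have hxN : x ^ N ≠ 0 := by positivity
            field_simp
          rw [hcalc] at h3
          refine le_trans ?_ h3
          linarith [h2N4]
        have hexp : (Complex.exp (-(z / (((2 : ℝ) ^ k : ℝ) : ℂ)) ^ N)).re ≤ 1 / 2 := by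
          refine (Complex.re_le_norm _).trans ?_
          rw [Complex.norm_exp, Complex.neg_re]
          calc Real.exp (-((z / (((2 : ℝ) ^ k : ℝ) : ℂ)) ^ N).re) ≤ Real.exp (-2) :=
              Real.exp_le_exp.2 (by linarith)
            _ ≤ 1 / 2 := by
                rw [Real.exp_neg, inv_le_comm₀ (Real.exp_pos 2) (by norm_num)]
                have := Real.add_one_le_exp (2 : ℝ)
                norm_num
                linarith
        rw [hFre k z]
        have h5 : (1 : ℝ) / 2 ≤ 1 - (Complex.exp (-(z / (((2 : ℝ) ^ k : ℝ) : ℂ)) ^ N)).re := by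
          linarith
        calc d k / 2 = d k * (1 / 2) := by ring
          _ ≤ d k * (1 - (Complex.exp (-(z / (((2 : ℝ) ^ k : ℝ) : ℂ)) ^ N)).re) :=
              mul_le_mul_of_nonneg_left h5 (hd0 k)
      have hsum1 : σ x ≤ K * σ ((2 : ℝ) ^ j) := by
        have h1 : σ x ≤ σ ((2 : ℝ) ^ (j + 1)) := hm _ _ hx0.le hj2
        have h2 : ((2 : ℝ) ^ (j + 1)) = 2 * 2 ^ j := by ring
        rw [h2] at h1
        exact h1.trans (hKσ _ hT2j)
      have h6 : σ x / (2 * K) ≤ σ ((2 : ℝ) ^ j) / 2 := by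
        rw [div_le_div_iff₀ (by positivity) (by norm_num)]
        nlinarith
      have h7 : σ x / (2 * K) - σ 1 / 2 ≤ (σ ((2 : ℝ) ^ j) - σ 1) / 2 := by linarith
      calc σ x / (2 * K) - σ 1 / 2 ≤ (σ ((2 : ℝ) ^ j) - σ 1) / 2 := h7
        _ = ∑ k ∈ Finset.range j, d k / 2 := by rw [← Finset.sum_div, htel j]
        _ ≤ ∑ k ∈ Finset.range j, (F k z).re := Finset.sum_le_sum hFhalf
        _ ≤ ∑' k, (F k z).re := Summable.sum_le_tsum _ (fun k _ => hFnn k) (hsre z)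
        _ = (g z).re := (hgre z).symm
    · -- UPPER BOUND
      set k₀ : ℕ := j + 3 with hk₀def
      have hσk₀ : σ ((2 : ℝ) ^ k₀) ≤ K ^ 3 * σ x := by
        have h1 : ((2 : ℝ) ^ k₀) = 2 ^ 3 * 2 ^ j := by rw [hk₀def]; ring
        rw [h1]
        calc σ (2 ^ 3 * 2 ^ j) ≤ K ^ 3 * σ ((2 : ℝ) ^ j) := Ldb _ hT2j 3
          _ ≤ K ^ 3 * σ x := mul_le_mul_of_nonneg_left hσ2jx (by positivity)
      have hσk₀0 : 0 ≤ σ ((2 : ℝ) ^ k₀) := hnn _ (by positivity)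
      have hhead : ∑ k ∈ Finset.range k₀, (F k z).re ≤ 2 * σ ((2 : ℝ) ^ k₀) := by
        have hσ1 : 0 ≤ σ 1 := hnn 1 (by norm_num)
        calc ∑ k ∈ Finset.range k₀, (F k z).re ≤ ∑ k ∈ Finset.range k₀, 2 * d k :=
            Finset.sum_le_sum (fun k _ => hFle2 k)
          _ = 2 * (σ ((2 : ℝ) ^ k₀) - σ 1) := by rw [← Finset.mul_sum, htel k₀]
          _ ≤ 2 * σ ((2 : ℝ) ^ k₀) := by linarith
      have habsz2 : ‖z‖ ≤ (2 : ℝ) ^ (j + 2) := by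
        have h1 : b ≤ x := by nlinarith
        have h2 := Complex.norm_le_abs_re_add_abs_im z
        calc ‖z‖ ≤ |z.re| + |z.im| := h2
          _ ≤ x + b := by rw [← hxdef]; linarith
          _ ≤ 2 * x := by linarith
          _ ≤ 2 * 2 ^ (j + 1) := by linarith
          _ = 2 ^ (j + 2) := by ring
      set q : ℝ := ((2 : ℝ) ^ N)⁻¹ with hqdef
      have hq0 : 0 < q := by positivity
      have hKq : K * q ≤ 1 / 2 := by
        rw [hqdef, mul_inv_le_iff₀ (by positivity)]
        linarith
      have hKq0 : 0 ≤ K * q := by positivity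
      set D : ℝ := 2 * K * σ ((2 : ℝ) ^ k₀) * q with hDdef
      have htail : ∀ i : ℕ, (F (i + k₀) z).re ≤ D * (K * q) ^ i := by
        intro i
        have hT2k₀ : T₀ ≤ (2 : ℝ) ^ k₀ :=
          hT2j.trans (pow_le_pow_right₀ (by norm_num) (by omega))
        have hd_i : d (i + k₀) ≤ K ^ (i + 1) * σ ((2 : ℝ) ^ k₀) := by
          have h1 : d (i + k₀) ≤ σ ((2 : ℝ) ^ (i + k₀ + 1)) := by
            have := hnn ((2 : ℝ) ^ (i + k₀)) (by positivity)
            simp only [hddef]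
            linarith
          have h2 : ((2 : ℝ) ^ (i + k₀ + 1)) = 2 ^ (i + 1) * 2 ^ k₀ := by ring
          rw [h2] at h1
          exact h1.trans (Ldb _ hT2k₀ (i + 1))
        have hzdiv : ‖z‖ / 2 ^ (i + k₀) ≤ (1 / 2) * (1 / 2) ^ i := by
          have e1 : (2 : ℝ) ^ (i + k₀) = 2 ^ i * (2 * 2 ^ (j + 2)) := by
            rw [hk₀def]; ring
          rw [e1, div_le_iff₀ (by positivity)]
          have e3 : ((1 : ℝ) / 2) ^ i * 2 ^ i = 1 := by
            rw [← mul_pow]; norm_num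
          have e2 : ((1 : ℝ) / 2) * (1 / 2) ^ i * (2 ^ i * (2 * 2 ^ (j + 2))) = 2 ^ (j + 2) := by
            linear_combination (2 : ℝ) ^ (j + 2) * e3
          rw [e2]
          exact habsz2
        have hq12 : ((1 : ℝ) / 2) ^ N = q := by
          rw [hqdef, div_pow, one_pow, one_div]
        have habsw_i : ‖(z / (((2 : ℝ) ^ (i + k₀) : ℝ) : ℂ)) ^ N‖
            ≤ q ^ (i + 1) := by
          rw [habs_w]
          calc (‖z‖ / 2 ^ (i + k₀)) ^ N ≤ ((1 / 2) * (1 / 2 : ℝ) ^ i) ^ N :=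
              pow_le_pow_left₀ (by positivity) hzdiv N
            _ = (((1 : ℝ) / 2) ^ (i + 1)) ^ N := by
                congr 1
                rw [pow_succ']
            _ = (((1 : ℝ) / 2) ^ N) ^ (i + 1) := by
                rw [← pow_mul, ← pow_mul, Nat.mul_comm]
            _ = q ^ (i + 1) := by rw [hq12]
        have hq1 : q ≤ 1 := by
          rw [hqdef]
          apply inv_le_one_of_one_le₀
          exact one_le_pow₀ (by norm_num)
        have habsw1 : ‖(z / (((2 : ℝ) ^ (i + k₀) : ℝ) : ℂ)) ^ N‖ ≤ 1 :=
          habsw_i.trans (pow_le_one₀ hq0.le hq1)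
        have hre_le : (F (i + k₀) z).re ≤ d (i + k₀) * (2 * q ^ (i + 1)) := by
          refine (Complex.re_le_norm _).trans ?_
          have habsF : ‖F (i + k₀) z‖
              = d (i + k₀) *
                ‖1 - Complex.exp (-(z / (((2 : ℝ) ^ (i + k₀) : ℝ) : ℂ)) ^ N)‖ := by
            simp only [hFdef]
            rw [norm_mul, Complex.norm_real, Real.norm_eq_abs, abs_of_nonneg (hd0 _)]
          rw [habsF]
          apply mul_le_mul_of_nonneg_left _ (hd0 _)
          rw [← neg_sub, norm_neg]
          calc ‖Complex.exp (-(z / (((2 : ℝ) ^ (i + k₀) : ℝ) : ℂ)) ^ N) - 1‖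
              ≤ 2 * ‖-(z / (((2 : ℝ) ^ (i + k₀) : ℝ) : ℂ)) ^ N‖ := by
                apply Complex.norm_exp_sub_one_le
                rwa [norm_neg]
            _ = 2 * ‖(z / (((2 : ℝ) ^ (i + k₀) : ℝ) : ℂ)) ^ N‖ := by
                rw [norm_neg]
            _ ≤ 2 * q ^ (i + 1) := by gcongr
        refine hre_le.trans ?_
        calc d (i + k₀) * (2 * q ^ (i + 1))
            ≤ (K ^ (i + 1) * σ ((2 : ℝ) ^ k₀)) * (2 * q ^ (i + 1)) :=
              mul_le_mul_of_nonneg_right hd_i (by positivity)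
          _ = D * (K * q) ^ i := by rw [hDdef]; ring
      have hstail : Summable (fun i => (F (i + k₀) z).re) :=
        (summable_nat_add_iff k₀).2 (hsre z)
      have hKqlt : K * q < 1 := lt_of_le_of_lt hKq (by norm_num)
      have hgeo : Summable (fun i : ℕ => D * (K * q) ^ i) :=
        (summable_geometric_of_lt_one hKq0 hKqlt).mul_left D
      have hD0 : 0 ≤ D := by
        rw [hDdef]
        exact mul_nonneg (mul_nonneg (mul_nonneg (by norm_num) hK0.le) hσk₀0) hq0.le
      have htail2 : ∑' i, (F (i + k₀) z).re ≤ 2 * σ ((2 : ℝ) ^ k₀) := by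
        have h1 : ∑' i, (F (i + k₀) z).re ≤ D * (1 - K * q)⁻¹ := by
          refine (Summable.tsum_le_tsum htail hstail hgeo).trans ?_
          rw [tsum_mul_left, tsum_geometric_of_lt_one hKq0 hKqlt]
        refine h1.trans ?_
        have hinv2 : (1 - K * q)⁻¹ ≤ 2 := by
          rw [inv_le_comm₀ (by linarith) (by norm_num)]
          norm_num
          linarith
        have h7 : 4 * K * q ≤ 2 := by
          have h8 : (4 * K) * q ≤ 2 := by
            rw [hqdef, mul_inv_le_iff₀ (by positivity)]
            linarith
          linarith [h8]
        calc D * (1 - K * q)⁻¹ ≤ D * 2 := mul_le_mul_of_nonneg_left hinv2 hD0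
          _ = (4 * K * q) * σ ((2 : ℝ) ^ k₀) := by rw [hDdef]; ring
          _ ≤ 2 * σ ((2 : ℝ) ^ k₀) := mul_le_mul_of_nonneg_right h7 hσk₀0
      rw [hgre z, ← Summable.sum_add_tsum_nat_add k₀ (hsre z)]
      have hσx0 : 0 ≤ σ x := hnn x hx0.le
      have := add_le_add hhead htail2
      refine this.trans ?_
      nlinarith [hσk₀]
  -- put everything together
  set A : ℝ := 4 * K ^ 3 with hAdef
  have hK3 : (1 : ℝ) ≤ K ^ 3 := one_le_pow₀ hK1
  have hA1 : (1 : ℝ) ≤ A := by rw [hAdef]; linarith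
  have hA0 : (0 : ℝ) < A := lt_of_lt_of_le one_pos hA1
  set a : ℝ := (2 * K * A)⁻¹ with hadef
  have ha0 : (0 : ℝ) < a := by positivity
  have ha1 : a ≤ 1 := by
    rw [hadef]
    apply inv_le_one_of_one_le₀
    nlinarith
  set Q : ℂ → ℂ := fun z => Complex.exp (((A⁻¹ : ℝ) : ℂ) * g z) with hQdef
  have hQdiff : Differentiable ℂ Q := (hgdiff.const_mul _).cexp
  have hQabs : ∀ z : ℂ, ‖Q z‖ = Real.exp (A⁻¹ * (g z).re) := by
    intro z
    rw [hQdef]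
    rw [Complex.norm_exp, Complex.re_ofReal_mul]
  refine ⟨Q, a, hQdiff, ⟨ha0, ha1⟩, ?_⟩
  intro n
  set b : ℝ := (n : ℝ) with hbdef
  have hb0 : (0 : ℝ) ≤ b := Nat.cast_nonneg n
  set R : ℝ := 8 * (N : ℝ) * (b + 1) + 2 * T₀ + 8 with hRdef
  have hR0 : (0 : ℝ) < R := by positivity
  -- compactness bound on the near region
  set S : Set ℂ := {z : ℂ | |z.re| ≤ R ∧ |z.im| ≤ b} with hSdef
  have hSclosed : IsClosed S := by
    have h1 : S = {z : ℂ | |z.re| ≤ R} ∩ {z : ℂ | |z.im| ≤ b} := rfl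
    rw [h1]
    exact IsClosed.inter
      (isClosed_le (continuous_abs.comp Complex.continuous_re) continuous_const)
      (isClosed_le (continuous_abs.comp Complex.continuous_im) continuous_const)
  have hSsub : S ⊆ Metric.closedBall (0 : ℂ) (R + b) := by
    intro z hz
    obtain ⟨h1, h2⟩ := hz
    rw [Metric.mem_closedBall, Complex.dist_eq, sub_zero]
    calc ‖z‖ ≤ |z.re| + |z.im| := Complex.norm_le_abs_re_add_abs_im z
      _ ≤ R + b := add_le_add h1 h2
  have hScomp : IsCompact S :=
    (isCompact_closedBall (0 : ℂ) (R + b)).of_isClosed_subset hSclosed hSsub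
  obtain ⟨M₀, hM₀⟩ := hScomp.exists_bound_of_continuousOn
    (f := fun z => (g z).re) ((Complex.continuous_re.comp hgdiff.continuous).continuousOn)
  have hM₀' : ∀ z ∈ S, |(g z).re| ≤ M₀ := by
    intro z hz
    have := hM₀ z hz
    rwa [Real.norm_eq_abs] at this
  have hσR0 : 0 ≤ σ R := hnn R hR0.le
  constructor
  · -- lower bound
    refine ⟨Real.exp (min (-(σ 1) / (2 * A)) (-(M₀ / A) - a * σ R)), Real.exp_pos _, ?_⟩
    intro z him
    rw [hQabs z, ← Real.exp_add]
    apply Real.exp_le_exp.2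
    by_cases hcase : R ≤ |z.re|
    · have h1 := (hBoth b z hb0 him (by rw [← hRdef]; exact hcase)).1
      have h2 : A⁻¹ * (σ |z.re| / (2 * K) - σ 1 / 2) ≤ A⁻¹ * (g z).re :=
        mul_le_mul_of_nonneg_left h1 (by positivity)
      have h3 : A⁻¹ * (σ |z.re| / (2 * K) - σ 1 / 2)
          = a * σ |z.re| - σ 1 / (2 * A) := by
        rw [hadef]
        field_simp
      rw [h3] at h2
      calc min (-(σ 1) / (2 * A)) (-(M₀ / A) - a * σ R) ≤ -(σ 1) / (2 * A) :=
          min_le_left _ _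
        _ ≤ -(a * σ |z.re|) + A⁻¹ * (g z).re := by
            have : -(σ 1) / (2 * A) = -(σ 1 / (2 * A)) := by ring
            linarith
    · push_neg at hcase
      have hzS : z ∈ S := ⟨hcase.le, him⟩
      have h1 : -M₀ ≤ (g z).re := by
        have := hM₀' z hzS
        have h2 := abs_le.mp this
        linarith [h2.1]
      have h2 : -(M₀ / A) ≤ A⁻¹ * (g z).re := by
        have h3 : A⁻¹ * (-M₀) ≤ A⁻¹ * (g z).re :=
          mul_le_mul_of_nonneg_left h1 (by positivity)
        calc -(M₀ / A) = A⁻¹ * (-M₀) := by field_simp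
          _ ≤ A⁻¹ * (g z).re := h3
      have h4 : a * σ |z.re| ≤ a * σ R :=
        mul_le_mul_of_nonneg_left (hm _ _ (abs_nonneg _) hcase.le) ha0.le
      calc min (-(σ 1) / (2 * A)) (-(M₀ / A) - a * σ R) ≤ -(M₀ / A) - a * σ R :=
          min_le_right _ _
        _ ≤ -(a * σ |z.re|) + A⁻¹ * (g z).re := by linarith
  · -- upper bound
    refine ⟨Real.exp (max 0 (M₀ / A)), ?_⟩
    intro z him
    rw [hQabs z, ← Real.exp_add]
    apply Real.exp_le_exp.2
    have hσz0 : 0 ≤ σ |z.re| := hnn _ (abs_nonneg _)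
    by_cases hcase : R ≤ |z.re|
    · have h1 := (hBoth b z hb0 him (by rw [← hRdef]; exact hcase)).2
      have h2 : A⁻¹ * (g z).re ≤ A⁻¹ * (4 * K ^ 3 * σ |z.re|) :=
        mul_le_mul_of_nonneg_left h1 (by positivity)
      have h3 : A⁻¹ * (4 * K ^ 3 * σ |z.re|) = σ |z.re| := by
        rw [hAdef]
        field_simp
      rw [h3] at h2
      calc -σ |z.re| + A⁻¹ * (g z).re ≤ 0 := by linarith
        _ ≤ max 0 (M₀ / A) := le_max_left _ _
    · push_neg at hcase
      have hzS : z ∈ S := ⟨hcase.le, him⟩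
      have h1 : (g z).re ≤ M₀ := by
        have := abs_le.mp (hM₀' z hzS)
        linarith [this.2]
      have h2 : A⁻¹ * (g z).re ≤ M₀ / A := by
        have h3 : A⁻¹ * (g z).re ≤ A⁻¹ * M₀ :=
          mul_le_mul_of_nonneg_left h1 (by positivity)
        calc A⁻¹ * (g z).re ≤ A⁻¹ * M₀ := h3
          _ = M₀ / A := by field_simp
      calc -σ |z.re| + A⁻¹ * (g z).re ≤ M₀ / A := by linarith
        _ ≤ max 0 (M₀ / A) := le_max_right _ _
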